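/- Let p, q, r be positive integers and let b = gcd(pq, pr, qr). Then the abelianization of the triangle group Δ(p,q,r) = ⟨f, g, h ∣ f^r, g^p, h^q, fgh⟩ is a finite group of cardinality b. -/

import Mathlib

/-- The relators of the triangle group Δ(p,q,r) = ⟨f, g, h ∣ f^r, g^p, h^q, fgh⟩,
where f, g, h are the generators indexed by 0, 1, 2 in `Fin 3`. -/
def triangleRels (p q r : ℕ) : Set (FreeGroup (Fin 3)) :=
  {FreeGroup.of 0 ^ r, FreeGroup.of 1 ^ p, FreeGroup.of 2 ^ q,
    FreeGroup.of 0 * FreeGroup.of 1 * FreeGroup.of 2}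

/-- The triangle group Δ(p,q,r) = ⟨f, g, h ∣ f^r, g^p, h^q, fgh⟩. -/
abbrev TriangleGroup (p q r : ℕ) : Type := PresentedGroup (triangleRels p q r)

section Aux

variable (p q r : ℕ)

/-- The target abelian group: (ZMod p × ZMod q) modulo the diagonal element (r, r). -/
abbrev TGAux (p q r : ℕ) : Type :=
  (ZMod p × ZMod q) ⧸ AddSubgroup.zmultiples (((r : ZMod p), (r : ZMod q)))

/-- Images of the three generators. -/
def tgGens (p q r : ℕ) : Fin 3 → Multiplicative (TGAux p q r) :=
  fun i =>
    Multiplicative.ofAdd <| QuotientAddGroup.mk <|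
      if i = 0 then (-1, -1) else if i = 1 then (1, 0) else (0, 1)

theorem tgGens_rels : ∀ w ∈ triangleRels p q r, FreeGroup.lift (tgGens p q r) w = 1 := by
  have hmk : ∀ v : ZMod p × ZMod q, v ∈ AddSubgroup.zmultiples (((r : ZMod p), (r : ZMod q))) →
      (QuotientAddGroup.mk v : TGAux p q r) = 0 := fun v hv =>
    (QuotientAddGroup.eq_zero_iff v).mpr hv
  intro w hw
  have hz : (((r : ZMod p), (r : ZMod q))) ∈
      AddSubgroup.zmultiples (((r : ZMod p), (r : ZMod q))) :=
    AddSubgroup.mem_zmultiples _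
  rcases hw with h | h | h | h <;> subst h
  · rw [map_pow, FreeGroup.lift_apply_of]
    show (Multiplicative.ofAdd (QuotientAddGroup.mk ((-1 : ZMod p), (-1 : ZMod q)))) ^ r = 1
    rw [← ofAdd_nsmul, ← QuotientAddGroup.mk_nsmul]
    have : r • ((-1 : ZMod p), (-1 : ZMod q)) = -(((r : ZMod p), (r : ZMod q))) := by
      ext <;> simp [nsmul_eq_mul]
    rw [this, hmk _ (neg_mem hz)]
    rfl
  · rw [map_pow, FreeGroup.lift_apply_of]
    show (Multiplicative.ofAdd (QuotientAddGroup.mk ((1 : ZMod p), (0 : ZMod q)))) ^ p = 1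
    rw [← ofAdd_nsmul, ← QuotientAddGroup.mk_nsmul]
    have : p • ((1 : ZMod p), (0 : ZMod q)) = 0 := by
      ext <;> simp [nsmul_eq_mul, ZMod.natCast_self]
    rw [this]
    rfl
  · rw [map_pow, FreeGroup.lift_apply_of]
    show (Multiplicative.ofAdd (QuotientAddGroup.mk ((0 : ZMod p), (1 : ZMod q)))) ^ q = 1
    rw [← ofAdd_nsmul, ← QuotientAddGroup.mk_nsmul]
    have : q • ((0 : ZMod p), (1 : ZMod q)) = 0 := by
      ext <;> simp [nsmul_eq_mul, ZMod.natCast_self]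
    rw [this]
    rfl
  · rw [map_mul, map_mul, FreeGroup.lift_apply_of, FreeGroup.lift_apply_of, FreeGroup.lift_apply_of]
    show Multiplicative.ofAdd (QuotientAddGroup.mk ((-1 : ZMod p), (-1 : ZMod q))) *
        Multiplicative.ofAdd (QuotientAddGroup.mk ((1 : ZMod p), (0 : ZMod q))) *
        Multiplicative.ofAdd (QuotientAddGroup.mk ((0 : ZMod p), (1 : ZMod q))) = 1
    rw [← ofAdd_add, ← ofAdd_add, ← QuotientAddGroup.mk_add, ← QuotientAddGroup.mk_add]
    norm_num
    exact zero_mem _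

/-- The forward homomorphism. -/
noncomputable def tgPhi : Abelianization (TriangleGroup p q r) →* Multiplicative (TGAux p q r) :=
  Abelianization.lift (PresentedGroup.toGroup (tgGens_rels p q r))

/-- The images of the generators in the abelianization. -/
def tgGenAb (i : Fin 3) : Abelianization (TriangleGroup p q r) :=
  Abelianization.of (PresentedGroup.of i)

theorem tg_rel_one (w : FreeGroup (Fin 3)) (hw : w ∈ triangleRels p q r) :
    (PresentedGroup.mk (triangleRels p q r) w : TriangleGroup p q r) = 1 :=
  (QuotientGroup.eq_one_iff w).mpr (Subgroup.subset_normalClosure hw)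

theorem tgGenAb_pow0 : tgGenAb p q r 0 ^ r = 1 := by
  have := congrArg Abelianization.of
    (tg_rel_one p q r _ (Or.inl rfl : FreeGroup.of 0 ^ r ∈ triangleRels p q r))
  rwa [map_pow, map_one] at this

theorem tgGenAb_pow1 : tgGenAb p q r 1 ^ p = 1 := by
  have := congrArg Abelianization.of
    (tg_rel_one p q r (FreeGroup.of 1 ^ p) (by right; left; rfl))
  rwa [map_pow, map_one] at this

theorem tgGenAb_pow2 : tgGenAb p q r 2 ^ q = 1 := by
  have := congrArg Abelianization.of
    (tg_rel_one p q r (FreeGroup.of 2 ^ q) (by right; right; left; rfl))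
  rwa [map_pow, map_one] at this

theorem tgGenAb_mul : tgGenAb p q r 0 * tgGenAb p q r 1 * tgGenAb p q r 2 = 1 := by
  have := congrArg Abelianization.of
    (tg_rel_one p q r (FreeGroup.of 0 * FreeGroup.of 1 * FreeGroup.of 2)
      (by right; right; right; rfl))
  rwa [map_mul, map_mul, map_one] at this

/-- hom ℤ →+ Additive T sending 1 to generator i, as data for ZMod.lift. -/
noncomputable def tgPsi1 : ZMod p →+ Additive (Abelianization (TriangleGroup p q r)) :=
  ZMod.lift p ⟨zmultiplesHom _ (Additive.ofMul (tgGenAb p q r 1)), by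
    show ((p : ℤ) • Additive.ofMul (tgGenAb p q r 1)) = 0
    rw [← ofMul_zpow, zpow_natCast, tgGenAb_pow1]
    rfl⟩

noncomputable def tgPsi2 : ZMod q →+ Additive (Abelianization (TriangleGroup p q r)) :=
  ZMod.lift q ⟨zmultiplesHom _ (Additive.ofMul (tgGenAb p q r 2)), by
    show ((q : ℤ) • Additive.ofMul (tgGenAb p q r 2)) = 0
    rw [← ofMul_zpow, zpow_natCast, tgGenAb_pow2]
    rfl⟩

noncomputable def tgPsi0 : ZMod p × ZMod q →+ Additive (Abelianization (TriangleGroup p q r)) :=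
  (tgPsi1 p q r).coprod (tgPsi2 p q r)

theorem tgPsi0_diag : tgPsi0 p q r (((r : ZMod p), (r : ZMod q))) = 0 := by
  have h1 : tgPsi1 p q r ((r : ZMod p)) = (r : ℤ) • Additive.ofMul (tgGenAb p q r 1) := by
    have : ((r : ZMod p)) = (((r : ℤ) : ZMod p)) := by push_cast; rfl
    rw [this, tgPsi1, ZMod.lift_coe, zmultiplesHom_apply]
  have h2 : tgPsi2 p q r ((r : ZMod q)) = (r : ℤ) • Additive.ofMul (tgGenAb p q r 2) := by
    have : ((r : ZMod q)) = (((r : ℤ) : ZMod q)) := by push_cast; rfl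
    rw [this, tgPsi2, ZMod.lift_coe, zmultiplesHom_apply]
  rw [tgPsi0, AddMonoidHom.coprod_apply, h1, h2, ← smul_add]
  have hGH : Additive.ofMul (tgGenAb p q r 1) + Additive.ofMul (tgGenAb p q r 2) =
      -Additive.ofMul (tgGenAb p q r 0) := by
    rw [← ofMul_mul, ← ofMul_inv]
    congr 1
    have h := tgGenAb_mul p q r
    rw [mul_assoc] at h
    exact eq_inv_of_mul_eq_one_right h
  rw [hGH, smul_neg, ← ofMul_zpow, zpow_natCast, tgGenAb_pow0]
  rfl

theorem tgPsi0_zmult : ∀ v ∈ AddSubgroup.zmultiples (((r : ZMod p), (r : ZMod q))),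
    tgPsi0 p q r v = 0 := by
  intro v hv
  obtain ⟨k, rfl⟩ := AddSubgroup.mem_zmultiples_iff.mp hv
  rw [map_zsmul, tgPsi0_diag, smul_zero]

/-- The backward homomorphism. -/
noncomputable def tgPsi : Multiplicative (TGAux p q r) →* Abelianization (TriangleGroup p q r) :=
  AddMonoidHom.toMultiplicativeLeft
    (QuotientAddGroup.lift _ (tgPsi0 p q r) (tgPsi0_zmult p q r))

theorem tgPsi_mk (v : ZMod p × ZMod q) :
    tgPsi p q r (Multiplicative.ofAdd (QuotientAddGroup.mk v)) =
      Additive.toMul (tgPsi0 p q r v) := rfl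

theorem tgPhi_genAb (i : Fin 3) :
    tgPhi p q r (tgGenAb p q r i) = tgGens p q r i := by
  rw [tgPhi, tgGenAb, Abelianization.lift_apply_of, PresentedGroup.toGroup.of]

theorem tgPsi_gens0 : tgPsi p q r (tgGens p q r 0) = tgGenAb p q r 0 := by
  have hg : tgGens p q r 0 =
      Multiplicative.ofAdd (QuotientAddGroup.mk ((-1 : ZMod p), (-1 : ZMod q))) := rfl
  rw [hg, tgPsi_mk]
  have h1 : tgPsi1 p q r ((-1 : ZMod p)) = -Additive.ofMul (tgGenAb p q r 1) := by
    have : ((-1 : ZMod p)) = (((-1 : ℤ) : ZMod p)) := by push_cast; rfl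
    rw [this, tgPsi1, ZMod.lift_coe, zmultiplesHom_apply, neg_one_zsmul]
  have h2 : tgPsi2 p q r ((-1 : ZMod q)) = -Additive.ofMul (tgGenAb p q r 2) := by
    have : ((-1 : ZMod q)) = (((-1 : ℤ) : ZMod q)) := by push_cast; rfl
    rw [this, tgPsi2, ZMod.lift_coe, zmultiplesHom_apply, neg_one_zsmul]
  rw [tgPsi0, AddMonoidHom.coprod_apply, h1, h2]
  show (tgGenAb p q r 1)⁻¹ * (tgGenAb p q r 2)⁻¹ = tgGenAb p q r 0
  have h := tgGenAb_mul p q r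
  rw [mul_assoc] at h
  have : tgGenAb p q r 0 = (tgGenAb p q r 1 * tgGenAb p q r 2)⁻¹ :=
    eq_inv_of_mul_eq_one_left h
  rw [this, mul_inv_rev, mul_comm]

theorem tgPsi_gens1 : tgPsi p q r (tgGens p q r 1) = tgGenAb p q r 1 := by
  have hg : tgGens p q r 1 =
      Multiplicative.ofAdd (QuotientAddGroup.mk ((1 : ZMod p), (0 : ZMod q))) := rfl
  rw [hg, tgPsi_mk]
  have h1 : tgPsi1 p q r ((1 : ZMod p)) = Additive.ofMul (tgGenAb p q r 1) := by
    have : ((1 : ZMod p)) = (((1 : ℤ) : ZMod p)) := by push_cast; rfl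
    rw [this, tgPsi1, ZMod.lift_coe, zmultiplesHom_apply, one_zsmul]
  rw [tgPsi0, AddMonoidHom.coprod_apply, h1, map_zero, add_zero]
  rfl

theorem tgPsi_gens2 : tgPsi p q r (tgGens p q r 2) = tgGenAb p q r 2 := by
  have hg : tgGens p q r 2 =
      Multiplicative.ofAdd (QuotientAddGroup.mk ((0 : ZMod p), (1 : ZMod q))) := rfl
  rw [hg, tgPsi_mk]
  have h2 : tgPsi2 p q r ((1 : ZMod q)) = Additive.ofMul (tgGenAb p q r 2) := by
    have : ((1 : ZMod q)) = (((1 : ℤ) : ZMod q)) := by push_cast; rfl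
    rw [this, tgPsi2, ZMod.lift_coe, zmultiplesHom_apply, one_zsmul]
  rw [tgPsi0, AddMonoidHom.coprod_apply, h2, map_zero, zero_add]
  rfl

theorem tgPsi_gens (i : Fin 3) : tgPsi p q r (tgGens p q r i) = tgGenAb p q r i := by
  fin_cases i
  · exact tgPsi_gens0 p q r
  · exact tgPsi_gens1 p q r
  · exact tgPsi_gens2 p q r

theorem tg_left_inv : ∀ z : Abelianization (TriangleGroup p q r),
    tgPsi p q r (tgPhi p q r z) = z := by
  have : (tgPsi p q r).comp (tgPhi p q r) = MonoidHom.id _ := by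
    apply Abelianization.hom_ext
    apply PresentedGroup.ext
    intro i
    show tgPsi p q r (tgPhi p q r (tgGenAb p q r i)) = tgGenAb p q r i
    rw [tgPhi_genAb, tgPsi_gens]
  intro z
  exact DFunLike.congr_fun this z

theorem tg_right_inv (hp : p ≠ 0) (hq : q ≠ 0) : ∀ y : Multiplicative (TGAux p q r),
    tgPhi p q r (tgPsi p q r y) = y := by
  haveI : NeZero p := ⟨hp⟩
  haveI : NeZero q := ⟨hq⟩
  intro y
  obtain ⟨v, hv⟩ := QuotientAddGroup.mk_surjective (Multiplicative.toAdd y)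
  have hy : y = tgGens p q r 1 ^ v.1.val * tgGens p q r 2 ^ v.2.val := by
    have h1 : tgGens p q r 1 ^ v.1.val * tgGens p q r 2 ^ v.2.val =
        Multiplicative.ofAdd (QuotientAddGroup.mk
          (v.1.val • ((1 : ZMod p), (0 : ZMod q)) + v.2.val • ((0 : ZMod p), (1 : ZMod q)))) := by
      rw [QuotientAddGroup.mk_add, QuotientAddGroup.mk_nsmul, QuotientAddGroup.mk_nsmul,
        ofAdd_add, ofAdd_nsmul, ofAdd_nsmul]
      rfl
    have h2 : v.1.val • ((1 : ZMod p), (0 : ZMod q)) + v.2.val • ((0 : ZMod p), (1 : ZMod q))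
        = v := by
      ext
      · simpa [nsmul_eq_mul] using ZMod.natCast_rightInverse v.1
      · simpa [nsmul_eq_mul] using ZMod.natCast_rightInverse v.2
    rw [h1, h2, hv]
    rfl
  rw [hy]
  simp only [map_mul, map_pow, tgPsi_gens, tgPhi_genAb]

end Aux

theorem card_abelianization_triangleGroup (p q r : ℕ) (hp : 0 < p) (hq : 0 < q) (hr : 0 < r)
    (b : ℕ) (hb : b = Nat.gcd (p * q) (Nat.gcd (p * r) (q * r))) :
    Finite (Abelianization (TriangleGroup p q r)) ∧
      Nat.card (Abelianization (TriangleGroup p q r)) = b := by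
  haveI : NeZero p := ⟨hp.ne'⟩
  haveI : NeZero q := ⟨hq.ne'⟩
  -- the equivalence
  let e : Abelianization (TriangleGroup p q r) ≃* Multiplicative (TGAux p q r) :=
    { toFun := tgPhi p q r
      invFun := tgPsi p q r
      left_inv := tg_left_inv p q r
      right_inv := tg_right_inv p q r hp.ne' hq.ne'
      map_mul' := map_mul (tgPhi p q r) }
  haveI : Finite (TGAux p q r) := Quotient.finite _
  haveI hfin : Finite (Abelianization (TriangleGroup p q r)) :=
    Finite.of_injective _ e.injective
  refine ⟨hfin, ?_⟩
  have hcardeq : Nat.card (Abelianization (TriangleGroup p q r)) = Nat.card (TGAux p q r) :=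
    Nat.card_congr e.toEquiv
  -- compute the order of the diagonal element
  set L := Nat.lcm p q with hL
  have hLne : L ≠ 0 := Nat.lcm_ne_zero hp.ne' hq.ne'
  haveI : NeZero L := ⟨hLne⟩
  let χ : ZMod L →+ ZMod p × ZMod q :=
    ((ZMod.castHom (Nat.dvd_lcm_left p q) (ZMod p)).toAddMonoidHom.prod
      (ZMod.castHom (Nat.dvd_lcm_right p q) (ZMod q)).toAddMonoidHom)
  have hχ : Function.Injective χ := by
    rw [injective_iff_map_eq_zero]
    intro x hx
    have hxval : x = ((x.val : ℕ) : ZMod L) := (ZMod.natCast_rightInverse x).symm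
    rw [hxval] at hx ⊢
    rw [Prod.ext_iff] at hx
    obtain ⟨hx1, hx2⟩ := hx
    simp only [χ, AddMonoidHom.prod_apply, RingHom.toAddMonoidHom_eq_coe,
      AddMonoidHom.coe_coe, map_natCast, Prod.fst_zero, Prod.snd_zero] at hx1 hx2
    have h1 : p ∣ x.val := (ZMod.natCast_eq_zero_iff _ _).mp hx1
    have h2 : q ∣ x.val := (ZMod.natCast_eq_zero_iff _ _).mp hx2
    rw [ZMod.natCast_eq_zero_iff]
    exact Nat.lcm_dvd h1 h2
  have hz : χ ((r : ZMod L)) = (((r : ZMod p), (r : ZMod q))) := by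
    have h1 := map_natCast (ZMod.castHom (Nat.dvd_lcm_left p q) (ZMod p)) r
    have h2 := map_natCast (ZMod.castHom (Nat.dvd_lcm_right p q) (ZMod q)) r
    exact Prod.ext h1 h2
  have hord : addOrderOf (((r : ZMod p), (r : ZMod q))) = L / L.gcd r := by
    rw [← hz, addOrderOf_injective χ hχ, ZMod.addOrderOf_coe r hLne]
  -- cardinality computation
  have hcard : Nat.card (ZMod p × ZMod q) =
      Nat.card (TGAux p q r) *
        Nat.card (AddSubgroup.zmultiples (((r : ZMod p), (r : ZMod q)))) :=
    AddSubgroup.card_eq_card_quotient_mul_card_addSubgroup _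
  rw [Nat.card_prod, Nat.card_zmod, Nat.card_zmod, Nat.card_zmultiples, hord] at hcard
  -- b = gcd p q * gcd L r
  have hbeq : b = Nat.gcd p q * Nat.gcd L r := by
    rw [hb, Nat.gcd_mul_right, ← Nat.gcd_mul_lcm p q, ← hL, Nat.gcd_mul_left]
  have hdvd : L.gcd r ∣ L := Nat.gcd_dvd_left L r
  have hgpos : 0 < L.gcd r := Nat.gcd_pos_of_pos_left r (Nat.pos_of_ne_zero hLne)
  have hqpos : 0 < L / L.gcd r := Nat.div_pos (Nat.le_of_dvd (Nat.pos_of_ne_zero hLne) hdvd) hgpos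
  have hbmul : b * (L / L.gcd r) = p * q := by
    rw [hbeq, mul_assoc, Nat.mul_div_cancel' hdvd, Nat.gcd_mul_lcm]
  rw [hcardeq]
  have : Nat.card (TGAux p q r) * (L / L.gcd r) = b * (L / L.gcd r) := by
    rw [hbmul, ← hcard]
  exact Nat.eq_of_mul_eq_mul_right hqpos this
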